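/- The coordinates of P₁₂ and P₃₁ satisfy the Weierstrass equation of W, and in the group W(K) the sum P₁₂ + P₃₁ equals Q₀ or −Q₀, where Q₀ is the K-point with coordinates ((5/4)t² − 2t + 3, (5/8)t³ − 6t² + (31/2)t − 12). (The x-coordinate of Q₀ gives the weak contact conic C₃ : x = (5/4)t² − 2t + 3 of C₁+C₂.) -/

import Mathlib

open WeierstrassCurve.Affine (Point)

noncomputable section

/-- `K = ℂ(t)`, the field of rational functions in one variable over `ℂ`. -/
abbrev K : Type := RatFunc ℂ

/-- The variable `t` of `K = ℂ(t)`. -/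
def t : K := RatFunc.X

/-- The elliptic curve `W : y² = (x - t²)(x² - 10tx + 25x - 36)`, i.e.
`y² = x³ + (25 - 10t - t²)x² + (10t³ - 25t² - 36)x + 36t²`, over `K`. -/
def W : WeierstrassCurve.Affine K where
  a₁ := 0
  a₂ := 25 - 10 * t - t ^ 2
  a₃ := 0
  a₄ := 10 * t ^ 3 - 25 * t ^ 2 - 36
  a₆ := 36 * t ^ 2

/-- Coordinates of the point `P₁₂` coming from the line `L₁₂ : x = 5t - 6`. -/
def xP12 : K := 5 * t - 6
def yP12 : K := -(5 * (t - 2) * (t - 3))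

/-- Coordinates of the point `P₂₃` coming from the line `L₂₃ : x = 8t - 12`. -/
def xP23 : K := 8 * t - 12
def yP23 : K := -(4 * (t - 2) * (t - 6))

/-- Coordinates of the point `P₃₁` coming from the line `L₃₁ : x = 9t - 18`. -/
def xP31 : K := 9 * t - 18
def yP31 : K := -(3 * (t - 3) * (t - 6))

instance : CharZero K :=
  charZero_of_injective_algebraMap (RatFunc.algebraMap_injective ℂ)

/-- `t - c ≠ 0` in `K` for any constant `c : ℂ`. -/
lemma t_sub_ne_zero (c : ℂ) : t - algebraMap (Polynomial ℂ) K (Polynomial.C c) ≠ 0 := by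
  rw [show t - algebraMap (Polynomial ℂ) K (Polynomial.C c)
      = algebraMap (Polynomial ℂ) K (Polynomial.X - Polynomial.C c) by
    simp [t, RatFunc.algebraMap_X, map_sub]]
  exact RatFunc.algebraMap_ne_zero (Polynomial.X_sub_C_ne_zero c)

lemma Point.some_congr {F : Type*} [Field F] {W : WeierstrassCurve.Affine F}
    {x₁ y₁ x₂ y₂ : F} (hx : x₁ = x₂) (hy : y₁ = y₂) (h : W.Nonsingular x₁ y₁)
    (h' : W.Nonsingular x₂ y₂) : Point.some _ _ h = Point.some _ _ h' := by
  subst hx; subst hy; rfl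

open scoped Classical in
/-- The coordinates of `P₁₂` and `P₃₁` satisfy the Weierstrass equation of `W`, and
`P₁₂ + P₃₁ = ±Q₀` where `Q₀ = ((5/4)t² - 2t + 3, (5/8)t³ - 6t² + (31/2)t - 12)`
(whose `x`-coordinate gives the weak contact conic `C₃`). -/
theorem P12_add_P31_eq_Q0 :
    W.Equation xP12 yP12 ∧ W.Equation xP31 yP31 ∧
    ∃ (h12 : W.Nonsingular xP12 yP12) (h31 : W.Nonsingular xP31 yP31)
      (hQ0 : W.Nonsingular (5 / 4 * t ^ 2 - 2 * t + 3)
        (5 / 8 * t ^ 3 - 6 * t ^ 2 + 31 / 2 * t - 12)),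
      Point.some _ _ h12 + Point.some _ _ h31 = Point.some _ _ hQ0 ∨
      Point.some _ _ h12 + Point.some _ _ h31 = -Point.some _ _ hQ0 := by

  have h2 : t - 2 ≠ 0 := by simpa [map_ofNat] using t_sub_ne_zero 2
  have h3 : t - 3 ≠ 0 := by simpa [map_ofNat] using t_sub_ne_zero 3
  have h6 : t - 6 ≠ 0 := by simpa [map_ofNat] using t_sub_ne_zero 6
  have h85 : t - 8 / 5 ≠ 0 := by simpa [map_div₀, map_ofNat] using t_sub_ne_zero (8 / 5)
  have eq12 : W.Equation xP12 yP12 := by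
    rw [WeierstrassCurve.Affine.equation_iff]
    simp only [W, xP12, yP12]; ring
  have eq31 : W.Equation xP31 yP31 := by
    rw [WeierstrassCurve.Affine.equation_iff]
    simp only [W, xP31, yP31]; ring
  have y12ne : yP12 ≠ 0 := by
    simp only [yP12, neg_ne_zero]
    exact mul_ne_zero (mul_ne_zero (by norm_num) h2) h3
  have y31ne : yP31 ≠ 0 := by
    simp only [yP31, neg_ne_zero]
    exact mul_ne_zero (mul_ne_zero (by norm_num) h3) h6
  have yQ0eq : (5 / 8 * t ^ 3 - 6 * t ^ 2 + 31 / 2 * t - 12 : K)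
      = 5 / 8 * (t - 2) * (t - 6) * (t - 8 / 5) := by ring
  have yQ0ne : (5 / 8 * t ^ 3 - 6 * t ^ 2 + 31 / 2 * t - 12 : K) ≠ 0 := by
    rw [yQ0eq]
    exact mul_ne_zero (mul_ne_zero (mul_ne_zero (by norm_num) h2) h6) h85
  have ns : ∀ (x y : K), W.Equation x y → y ≠ 0 → W.Nonsingular x y := by
    intro x y he hy
    rw [WeierstrassCurve.Affine.nonsingular_iff]
    refine ⟨he, Or.inr ?_⟩
    simp only [W]
    intro h
    exact hy (by linear_combination h / 2)
  have h12 : W.Nonsingular xP12 yP12 := ns _ _ eq12 y12ne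
  have h31 : W.Nonsingular xP31 yP31 := ns _ _ eq31 y31ne
  have hx : xP12 ≠ xP31 := by
    simp only [xP12, xP31]
    intro h
    exact h3 (by linear_combination -h / 4)
  have hxs : xP12 - xP31 ≠ 0 := sub_ne_zero.mpr hx
  have hslope : W.slope xP12 xP31 yP12 yP31 = (t + 4) / 2 := by
    rw [WeierstrassCurve.Affine.slope_of_X_ne hx]
    rw [div_eq_div_iff hxs (by norm_num)]
    simp only [xP12, xP31, yP12, yP31]; ring
  have e1 : W.addX xP12 xP31 (W.slope xP12 xP31 yP12 yP31)
      = 5 / 4 * t ^ 2 - 2 * t + 3 := by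
    rw [hslope]
    simp only [WeierstrassCurve.Affine.addX, W, xP12, xP31]
    field_simp
    ring
  have e2 : W.negAddY xP12 xP31 yP12 (W.slope xP12 xP31 yP12 yP31)
      = 5 / 8 * t ^ 3 - 6 * t ^ 2 + 31 / 2 * t - 12 := by
    rw [WeierstrassCurve.Affine.negAddY, e1, hslope]
    simp only [xP12, yP12]
    field_simp
    ring
  have hneg := WeierstrassCurve.Affine.nonsingular_negAdd h12 h31
    (fun h => (hx h.1).elim)
  have hQ0 : W.Nonsingular (5 / 4 * t ^ 2 - 2 * t + 3)
      (5 / 8 * t ^ 3 - 6 * t ^ 2 + 31 / 2 * t - 12) := e1 ▸ e2 ▸ hneg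
  refine ⟨eq12, eq31, h12, h31, hQ0, Or.inr ?_⟩
  rw [WeierstrassCurve.Affine.Point.add_of_X_ne' hx]
  rw [Point.some_congr e1 e2 hneg hQ0]


end
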